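/- Let S̄ ⊆ ℝ^d be bounded measurable, A = {a ∈ ℤ^d : B_M(a) ⊆ S̄} with B_M(a) = M^{-1}a + M^{-1}[0,1]^d, and let T̄ = {(x,y) ∈ ℝ^d × ℝ^d : x ∈ S̄, x - y ∈ S̄, x + y ∈ S̄}. Then the number of pairs (a, b) ∈ ℤ^d × ℤ^d such that a, a - b, a + b ∈ A is at most (4M²)^d · vol(T̄). -/

import Mathlib

open MeasureTheory

theorem stmt_14 (d M : ℕ) (hM : 1 ≤ M)
    (Sbar : Set (Fin d → ℝ)) (hmeas : MeasurableSet Sbar)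
    (hbdd : Bornology.IsBounded Sbar)
    (BM : (Fin d → ℤ) → Set (Fin d → ℝ))
    (hBM : ∀ a, BM a = Set.univ.pi fun i =>
      Set.Icc ((a i : ℝ) / M) ((a i : ℝ) / M + 1 / M))
    (A : Set (Fin d → ℤ)) (hA : A = {a | BM a ⊆ Sbar})
    (Tbar : Set ((Fin d → ℝ) × (Fin d → ℝ)))
    (hT : Tbar = {p | p.1 ∈ Sbar ∧ p.1 - p.2 ∈ Sbar ∧ p.1 + p.2 ∈ Sbar}) :
    (({p : (Fin d → ℤ) × (Fin d → ℤ) |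
        p.1 ∈ A ∧ p.1 - p.2 ∈ A ∧ p.1 + p.2 ∈ A}.ncard) : ENNReal) ≤
      ((4 : ENNReal) * (M : ENNReal) ^ 2) ^ d * volume Tbar := by
  classical
  set P : Set ((Fin d → ℤ) × (Fin d → ℤ)) :=
    {p | p.1 ∈ A ∧ p.1 - p.2 ∈ A ∧ p.1 + p.2 ∈ A} with hPdef
  by_cases hfin : P.Finite
  swap
  · rw [Set.Infinite.ncard hfin]
    simp
  have hMR : (0 : ℝ) < M := by exact_mod_cast hM
  -- the boxes
  set X : (Fin d → ℤ) → Set (Fin d → ℝ) := fun a =>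
    Set.univ.pi fun i => Set.Icc (((a i : ℝ) + 1/4) / M) (((a i : ℝ) + 3/4) / M)
      with hXdef
  set Y : (Fin d → ℤ) → Set (Fin d → ℝ) := fun b =>
    Set.univ.pi fun i => Set.Icc (((b i : ℝ) - 1/4) / M) (((b i : ℝ) + 1/4) / M)
      with hYdef
  set T : ((Fin d → ℤ) × (Fin d → ℤ)) → Set ((Fin d → ℝ) × (Fin d → ℝ)) :=
    fun p => X p.1 ×ˢ Y p.2 with hTdef
  -- scaled membership characterizations
  have hXmem : ∀ (a : Fin d → ℤ) (x : Fin d → ℝ),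
      x ∈ X a ↔ ∀ i, (a i : ℝ) + 1/4 ≤ x i * M ∧ x i * M ≤ (a i : ℝ) + 3/4 := by
    intro a x
    simp only [hXdef, Set.mem_pi, Set.mem_univ, Set.mem_Icc, forall_true_left]
    refine forall_congr' fun i => ?_
    rw [div_le_iff₀ hMR, le_div_iff₀ hMR]
  have hYmem : ∀ (b : Fin d → ℤ) (y : Fin d → ℝ),
      y ∈ Y b ↔ ∀ i, (b i : ℝ) - 1/4 ≤ y i * M ∧ y i * M ≤ (b i : ℝ) + 1/4 := by
    intro b y
    simp only [hYdef, Set.mem_pi, Set.mem_univ, Set.mem_Icc, forall_true_left]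
    refine forall_congr' fun i => ?_
    rw [div_le_iff₀ hMR, le_div_iff₀ hMR]
  have hBMmem : ∀ (c : Fin d → ℤ) (z : Fin d → ℝ),
      (∀ i, (c i : ℝ) ≤ z i * M ∧ z i * M ≤ (c i : ℝ) + 1) → z ∈ BM c := by
    intro c z h
    rw [hBM]
    intro i _
    obtain ⟨h1, h2⟩ := h i
    constructor
    · rw [div_le_iff₀ hMR]; linarith
    · rw [← add_div, le_div_iff₀ hMR]; linarith
  -- T p ⊆ Tbar for p ∈ P
  have hsub : ∀ p ∈ P, T p ⊆ Tbar := by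
    rintro ⟨a, b⟩ ⟨ha, hab1, hab2⟩ ⟨x, y⟩ ⟨hx, hy⟩
    rw [hXmem] at hx
    rw [hYmem] at hy
    rw [hA] at ha hab1 hab2
    rw [hT]
    refine ⟨ha ?_, hab1 (hBMmem _ _ fun i => ?_), hab2 (hBMmem _ _ fun i => ?_)⟩
    · apply hBMmem
      intro i
      obtain ⟨h1, h2⟩ := hx i
      exact ⟨by linarith, by linarith⟩
    · obtain ⟨h1, h2⟩ := hx i
      obtain ⟨h3, h4⟩ := hy i
      have he : (x - y) i * M = x i * M - y i * M := by
        simp [Pi.sub_apply]; ring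
      rw [Pi.sub_apply, Int.cast_sub, he]
      exact ⟨by linarith, by linarith⟩
    · obtain ⟨h1, h2⟩ := hx i
      obtain ⟨h3, h4⟩ := hy i
      have he : (x + y) i * M = x i * M + y i * M := by
        simp [Pi.add_apply]; ring
      rw [Pi.add_apply, Int.cast_add, he]
      exact ⟨by linarith, by linarith⟩
  -- pairwise disjointness
  have hdisj : (↑hfin.toFinset : Set ((Fin d → ℤ) × (Fin d → ℤ))).PairwiseDisjoint T := by
    rintro p - q - hpq
    rw [Function.onFun, Set.disjoint_left]
    rintro ⟨x, y⟩ ⟨hx1, hy1⟩ ⟨hx2, hy2⟩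
    rw [hXmem] at hx1 hx2
    rw [hYmem] at hy1 hy2
    apply hpq
    have h1 : p.1 = q.1 := by
      funext i
      obtain ⟨a1, a2⟩ := hx1 i
      obtain ⟨b1, b2⟩ := hx2 i
      have : |((p.1 i - q.1 i : ℤ) : ℝ)| < 1 := by
        push_cast
        rw [abs_lt]
        constructor <;> linarith
      have h0 : p.1 i - q.1 i = 0 := by
        rw [← Int.abs_lt_one_iff]
        exact_mod_cast this
      omega
    have h2 : p.2 = q.2 := by
      funext i
      obtain ⟨a1, a2⟩ := hy1 i
      obtain ⟨b1, b2⟩ := hy2 i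
      have : |((p.2 i - q.2 i : ℤ) : ℝ)| < 1 := by
        push_cast
        rw [abs_lt]
        constructor <;> linarith
      have h0 : p.2 i - q.2 i = 0 := by
        rw [← Int.abs_lt_one_iff]
        exact_mod_cast this
      omega
    exact Prod.ext h1 h2
  -- measurability
  have hTmeas : ∀ p, MeasurableSet (T p) := by
    intro p
    exact (MeasurableSet.univ_pi fun i => measurableSet_Icc).prod
      (MeasurableSet.univ_pi fun i => measurableSet_Icc)
  -- volume of each box
  set c : ENNReal := ENNReal.ofReal (1 / (2 * M)) with hcdef
  have hvol : ∀ p, volume (T p) = c ^ d * c ^ d := by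
    intro p
    rw [hTdef]
    simp only [Measure.volume_eq_prod, Measure.prod_prod, hXdef, hYdef, volume_pi_pi,
      Real.volume_Icc]
    have e1 : ∀ r : ℝ, (r + 3/4) / M - (r + 1/4) / M = 1 / (2 * M) := by
      intro r; field_simp; ring
    have e2 : ∀ r : ℝ, (r + 1/4) / M - (r - 1/4) / M = 1 / (2 * M) := by
      intro r; field_simp; ring
    simp only [e1, e2, Finset.prod_const, Finset.card_univ, Fintype.card_fin, hcdef]
  -- summing volumes
  have hcard : (P.ncard : ENNReal) * (c ^ d * c ^ d) ≤ volume Tbar := by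
    rw [Set.ncard_eq_toFinset_card P hfin]
    calc ((hfin.toFinset.card : ENNReal)) * (c ^ d * c ^ d)
        = ∑ p ∈ hfin.toFinset, volume (T p) := by
          rw [Finset.sum_congr rfl fun p _ => hvol p, Finset.sum_const, nsmul_eq_mul]
      _ = volume (⋃ p ∈ hfin.toFinset, T p) :=
          (measure_biUnion_finset hdisj fun p _ => hTmeas p).symm
      _ ≤ volume Tbar := by
          apply measure_mono
          intro z hz
          simp only [Set.mem_iUnion] at hz
          obtain ⟨p, hp, hzp⟩ := hz
          exact hsub p (hfin.mem_toFinset.mp hp) hzp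
  -- the constant identity
  have hM0 : (M : ENNReal) ≠ 0 := Nat.cast_ne_zero.mpr (by omega)
  have h2M0 : (2 * (M : ENNReal)) ≠ 0 := mul_ne_zero two_ne_zero hM0
  have h2Mt : (2 * (M : ENNReal)) ≠ ⊤ := by
    simp [ENNReal.mul_ne_top]
  have hcval : c = (2 * (M : ENNReal))⁻¹ := by
    rw [hcdef, one_div, ENNReal.ofReal_inv_of_pos (by positivity)]
    congr 1
    rw [ENNReal.ofReal_mul (by norm_num)]
    norm_num [ENNReal.ofReal_natCast]
  have hkey : ((4 : ENNReal) * (M : ENNReal) ^ 2) ^ d * (c ^ d * c ^ d) = 1 := by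
    rw [hcval, ← mul_pow, ← mul_pow]
    have he : (4 : ENNReal) * (M : ENNReal) ^ 2 * ((2 * (M : ENNReal))⁻¹ * (2 * (M : ENNReal))⁻¹)
        = (2 * (M : ENNReal) * (2 * (M : ENNReal))⁻¹) * (2 * (M : ENNReal) * (2 * (M : ENNReal))⁻¹) := by
      ring
    rw [he, ENNReal.mul_inv_cancel h2M0 h2Mt, one_mul, one_pow]
  calc (P.ncard : ENNReal)
      = ((4 : ENNReal) * (M : ENNReal) ^ 2) ^ d * ((P.ncard : ENNReal) * (c ^ d * c ^ d)) := by
        rw [mul_left_comm, hkey, mul_one]  -- may need adjustment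
    _ ≤ ((4 : ENNReal) * (M : ENNReal) ^ 2) ^ d * volume Tbar :=
        mul_le_mul_right hcard _
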